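/- Let n ≥ 4 and let p : ZMod n → ℝ² be pairwise distinct points (the vertices of a polygon in cyclic order). Suppose that for every pair of distinct indices s, t, at least one of the two boundary polylines of the polygon from p_s to p_t (the one through p_{s+1}, p_{s+2}, …, and the one through p_{s−1}, p_{s−2}, …) is self-approaching. Then there do not exist indices i and j with j ∉ {i−1, i, i+1} such that both interior angles satisfy ∠ p_{i−1} p_i p_{i+1} < π/2 and ∠ p_{j−1} p_j p_{j+1} < π/2. In other words, in a self-approaching drawing of a polygon, no two non-consecutive angles can both be less than 90°. -/
import Mathlib

open Real EuclideanGeometry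
open scoped RealInnerProductSpace

noncomputable section

abbrev Pt : Type := EuclideanSpace ℝ (Fin 2)

/-- Vertex characterization of self-approaching polylines: `v 0, v 1, …, v (n-1)`
is self-approaching if for all `i < j ≤ n-1`, `⟪v (i+1) - v i, v j - v (i+1)⟫ ≥ 0`. -/
def SelfApproachingPts (n : ℕ) (v : ℕ → Pt) : Prop :=
  ∀ i j : ℕ, i < j → j < n → 0 ≤ ⟪v (i + 1) - v i, v j - v (i + 1)⟫

lemma inner_pos_of_angle_lt (a b c : Pt) (h1 : a ≠ b) (h2 : c ≠ b)
    (h : ∠ a b c < π / 2) : 0 < ⟪a - b, c - b⟫ := by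
  have hx : a - b ≠ 0 := sub_ne_zero.2 h1
  have hy : c - b ≠ 0 := sub_ne_zero.2 h2
  have hang : ∠ a b c = InnerProductGeometry.angle (a - b) (c - b) := rfl
  have hcos : 0 < Real.cos (InnerProductGeometry.angle (a - b) (c - b)) := by
    apply Real.cos_pos_of_mem_Ioo
    constructor
    · have := InnerProductGeometry.angle_nonneg (a - b) (c - b)
      have hpi : 0 < π := Real.pi_pos
      linarith
    · rw [← hang]; exact h
  have := InnerProductGeometry.cos_angle_mul_norm_mul_norm (a - b) (c - b)
  rw [← this]
  have hnx : 0 < ‖a - b‖ := norm_pos_iff.2 hx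
  have hny : 0 < ‖c - b‖ := norm_pos_iff.2 hy
  positivity

/-- In a self-approaching drawing of a polygon (for every pair of distinct
vertices, one of the two boundary polylines between them is self-approaching),
no two non-consecutive interior angles can both be less than 90°. -/
theorem stmt3 (n : ℕ) (hn : 4 ≤ n) (p : ZMod n → Pt) (hp : Function.Injective p)
    (hsa : ∀ s t : ZMod n, s ≠ t →
      SelfApproachingPts ((t - s).val + 1) (fun i => p (s + (i : ZMod n))) ∨
      SelfApproachingPts ((s - t).val + 1) (fun i => p (s - (i : ZMod n)))) :
    ¬ ∃ i j : ZMod n, j ≠ i - 1 ∧ j ≠ i ∧ j ≠ i + 1 ∧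
      ∠ (p (i - 1)) (p i) (p (i + 1)) < π / 2 ∧
      ∠ (p (j - 1)) (p j) (p (j + 1)) < π / 2 := by
  haveI : NeZero n := ⟨by omega⟩
  haveI : Fact (1 < n) := ⟨by omega⟩
  rintro ⟨i, j, hj1, hj2, hj3, hi, hj⟩
  -- sharp angles give positive inner products
  have hone : (1 : ZMod n) ≠ 0 := one_ne_zero
  have hne1 : ∀ k : ZMod n, k - 1 ≠ k := by
    intro k hk
    apply hone
    linear_combination -hk
  have hne2 : ∀ k : ZMod n, k + 1 ≠ k := by
    intro k hk
    exact hone (by linear_combination hk)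
  have hinner_i : 0 < ⟪p (i - 1) - p i, p (i + 1) - p i⟫ :=
    inner_pos_of_angle_lt _ _ _ (fun h => hne1 i (hp h)) (fun h => hne2 i (hp h)) hi
  have hinner_j : 0 < ⟪p (j - 1) - p j, p (j + 1) - p j⟫ :=
    inner_pos_of_angle_lt _ _ _ (fun h => hne1 j (hp h)) (fun h => hne2 j (hp h)) hj
  -- set up the pair s = j+1, t = j-1
  set s : ZMod n := j + 1 with hs
  set t : ZMod n := j - 1 with ht
  have h2 : ((2 : ℕ) : ZMod n) ≠ 0 := by
    rw [Ne, ZMod.natCast_eq_zero_iff]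
    intro h
    have := Nat.le_of_dvd (by norm_num) h
    omega
  have hst : s ≠ t := by
    intro h
    apply h2
    push_cast
    linear_combination h
  have hn2cast : ((n - 2 : ℕ) : ZMod n) = t - s := by
    push_cast [Nat.cast_sub (by omega : 2 ≤ n)]
    simp [ht, hs]
    ring
  have hts_val : (t - s).val = n - 2 := by
    rw [← hn2cast, ZMod.val_cast_of_lt (by omega)]
  have hst_val : (s - t).val = 2 := by
    have : s - t = ((2 : ℕ) : ZMod n) := by push_cast; ring
    rw [this, ZMod.val_cast_of_lt (by omega)]
  set m : ℕ := (i - s).val with hm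
  have hmcast : ((m : ℕ) : ZMod n) = i - s := ZMod.natCast_zmod_val _
  have hmlt : m < n := ZMod.val_lt _
  have hm0 : m ≠ 0 := by
    intro h
    apply hj1
    have : i - s = 0 := by rw [← hmcast, h]; simp
    have : i = s := by linear_combination this
    rw [hs] at this
    linear_combination -this
  have hmn2 : m ≠ n - 2 := by
    intro h
    apply hj3
    have : i - s = t - s := by rw [← hmcast, h, hn2cast]
    have : i = t := by linear_combination this
    rw [ht] at this
    linear_combination -this
  have hmn1 : m ≠ n - 1 := by
    intro h
    apply hj2
    have hc : ((n - 1 : ℕ) : ZMod n) = -1 := by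
      push_cast [Nat.cast_sub (by omega : 1 ≤ n)]
      simp
    have : i - s = -1 := by rw [← hmcast, h, hc]
    have : i = s - 1 := by linear_combination this
    rw [hs] at this
    linear_combination -this
  have hm1 : 1 ≤ m := Nat.one_le_iff_ne_zero.2 hm0
  have hmle : m ≤ n - 3 := by omega
  rcases hsa s t hst with hA | hB
  · -- forward path contains i as interior vertex
    rw [hts_val] at hA
    have := hA (m - 1) (m + 1) (by omega) (by omega)
    simp only at this
    rw [show m - 1 + 1 = m by omega] at this
    have e1 : s + ((m - 1 : ℕ) : ZMod n) = i - 1 := by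
      push_cast [Nat.cast_sub hm1, hmcast]
      ring
    have e2 : s + ((m : ℕ) : ZMod n) = i := by rw [hmcast]; ring
    have e3 : s + ((m + 1 : ℕ) : ZMod n) = i + 1 := by
      push_cast [hmcast]
      ring
    rw [e1, e2, e3] at this
    rw [show p i - p (i - 1) = -(p (i - 1) - p i) by abel, inner_neg_left] at this
    have hcomm : ⟪p (i + 1) - p i, p (i - 1) - p i⟫ = ⟪p (i - 1) - p i, p (i + 1) - p i⟫ :=
      real_inner_comm _ _
    nlinarith [this, hinner_i, hcomm]
  · -- backward path contains j as interior vertex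
    rw [hst_val] at hB
    have := hB 0 2 (by omega) (by omega)
    simp only at this
    have e1 : s - ((0 + 1 : ℕ) : ZMod n) = j := by push_cast [hs]; ring
    have e2 : s - ((2 : ℕ) : ZMod n) = j - 1 := by push_cast [hs]; ring
    have e0 : s - ((0 : ℕ) : ZMod n) = j + 1 := by push_cast [hs]; ring
    rw [e1, e2, e0] at this
    have hcomm : ⟪p (j - 1) - p j, p (j + 1) - p j⟫ = ⟪p (j + 1) - p j, p (j - 1) - p j⟫ :=
      real_inner_comm _ _
    rw [show p j - p (j + 1) = -(p (j + 1) - p j) by abel, inner_neg_left] at this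
    linarith [hcomm ▸ hinner_j]
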